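/- For p = 5, the energy of the soliton Q = Q_1 vanishes: ∫_ℝ ( Q^{6}/30 − (Q')²/2 ) dx = 0, where Q(z) = (15 · sech²(2z))^{1/4}. -/

import Mathlib

open MeasureTheory Filter Real Topology

noncomputable def sech (z : ℝ) : ℝ := 2 / (Real.exp z + Real.exp (-z))

lemma sech_eq (z : ℝ) : sech z = (Real.cosh z)⁻¹ := by
  rw [sech, Real.cosh_eq, inv_div]

lemma aux1 (z : ℝ) : (15 * sech (2*z) ^ 2) ^ ((1:ℝ)/4)
    = 15 ^ ((1:ℝ)/4) * Real.cosh (2*z) ^ (-(1:ℝ)/2) := by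
  have hc := Real.cosh_pos (x := 2*z)
  rw [sech_eq, inv_pow, ← Real.rpow_natCast (Real.cosh (2*z)) 2,
    ← Real.rpow_neg hc.le,
    Real.mul_rpow (by norm_num) (Real.rpow_nonneg hc.le _),
    ← Real.rpow_mul hc.le]
  norm_num

lemma hQderiv (x : ℝ) :
    HasDerivAt (fun z => (15:ℝ) ^ ((1:ℝ)/4) * Real.cosh (2*z) ^ (-(1:ℝ)/2))
      (15 ^ ((1:ℝ)/4) * ((-(1:ℝ)/2) * Real.cosh (2*x) ^ (-(1:ℝ)/2 - 1) * (Real.sinh (2*x) * 2))) x := by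
  have h1 : HasDerivAt (fun z : ℝ => 2*z) 2 x := by
    simpa using (hasDerivAt_id x).const_mul 2
  have h2 : HasDerivAt (fun z : ℝ => Real.cosh (2*z)) (Real.sinh (2*x) * 2) x :=
    (Real.hasDerivAt_cosh (2*x)).comp x h1
  have h3 := (h2.rpow_const (p := -(1:ℝ)/2) (Or.inl (Real.cosh_pos (2*x)).ne')).const_mul
    ((15:ℝ)^((1:ℝ)/4))
  refine h3.congr_deriv ?_
  ring

lemma pointwise (Q : ℝ → ℝ)
    (hQ : ∀ z, Q z = (15 * sech (2 * z) ^ 2) ^ ((1 : ℝ) / 4)) (x : ℝ) :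
    (Q x) ^ 6 / 30 - (deriv Q x) ^ 2 / 2
      = Real.sqrt 15 / 2 * ((1 - Real.sinh (2*x)^2) / Real.cosh (2*x)^3) := by
  have hQfun : Q = fun z => (15:ℝ) ^ ((1:ℝ)/4) * Real.cosh (2*z) ^ (-(1:ℝ)/2) :=
    funext fun z => by rw [hQ z, aux1]
  have hd := hQderiv x
  rw [← hQfun] at hd
  rw [hd.deriv, hQfun]
  have hc := Real.cosh_pos (x := 2*x)
  set c := Real.cosh (2*x) with hcdef
  have h15 : ((15:ℝ) ^ ((1:ℝ)/4)) ^ (2:ℕ) = Real.sqrt 15 := by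
    rw [← Real.rpow_natCast ((15:ℝ) ^ ((1:ℝ)/4)) 2, ← Real.rpow_mul (by norm_num),
      Real.sqrt_eq_rpow]
    norm_num
  have h156 : ((15:ℝ) ^ ((1:ℝ)/4)) ^ (6:ℕ) = 15 * Real.sqrt 15 := by
    rw [← Real.rpow_natCast ((15:ℝ) ^ ((1:ℝ)/4)) 6, ← Real.rpow_mul (by norm_num)]
    rw [show (1:ℝ)/4 * (6:ℕ) = 1 + 1/2 by push_cast; norm_num,
      Real.rpow_add (by norm_num), Real.rpow_one, Real.sqrt_eq_rpow]
  have hc6 : (c ^ (-(1:ℝ)/2)) ^ (6:ℕ) = (c^3)⁻¹ := by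
    rw [← Real.rpow_natCast (c ^ (-(1:ℝ)/2)) 6, ← Real.rpow_mul hc.le,
      show (-(1:ℝ)/2 * (6:ℕ)) = -(3:ℕ) by push_cast; norm_num,
      Real.rpow_neg hc.le, Real.rpow_natCast]
  have hc2 : (c ^ (-(1:ℝ)/2 - 1)) ^ (2:ℕ) = (c^3)⁻¹ := by
    rw [← Real.rpow_natCast (c ^ (-(1:ℝ)/2 - 1)) 2, ← Real.rpow_mul hc.le,
      show ((-(1:ℝ)/2 - 1) * (2:ℕ)) = -(3:ℕ) by push_cast; norm_num,
      Real.rpow_neg hc.le, Real.rpow_natCast]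
  have hs := Real.cosh_sq (2*x)
  rw [← hcdef] at hs
  rw [mul_pow, mul_pow, mul_pow, mul_pow, h15, h156, hc6, hc2]
  have hss : Real.sinh (2*x)^2 = c^2 - 1 := by linarith
  have h4 : (Real.sinh (2*x) * 2)^2 = 4*c^2 - 4 := by rw [mul_pow, hss]; ring
  have h1s : (1:ℝ) - Real.sinh (2*x)^2 = 2 - c^2 := by linarith
  rw [h4, h1s]
  field_simp
  ring

noncomputable def F (x : ℝ) : ℝ := Real.sqrt 15 / 4 * (Real.sinh (2*x) / Real.cosh (2*x) ^ 2)

lemma hFderiv (x : ℝ) :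
    HasDerivAt F (Real.sqrt 15 / 2 * ((1 - Real.sinh (2*x)^2) / Real.cosh (2*x)^3)) x := by
  have h1 : HasDerivAt (fun z : ℝ => 2*z) 2 x := by
    simpa using (hasDerivAt_id x).const_mul 2
  have h2 : HasDerivAt (fun z : ℝ => Real.cosh (2*z)) (Real.sinh (2*x) * 2) x :=
    (Real.hasDerivAt_cosh (2*x)).comp x h1
  have h3 : HasDerivAt (fun z : ℝ => Real.sinh (2*z)) (Real.cosh (2*x) * 2) x :=
    (Real.hasDerivAt_sinh (2*x)).comp x h1
  have h4 : HasDerivAt (fun z : ℝ => Real.cosh (2*z) ^ 2)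
      (2 * Real.cosh (2*x) ^ 1 * (Real.sinh (2*x) * 2)) x := by
    simpa using h2.fun_pow 2
  have hc := Real.cosh_pos (2*x)
  have h5 := ((h3.div h4 (by positivity)).const_mul (Real.sqrt 15 / 4))
  refine HasDerivAt.congr_deriv (f := F) h5 ?_
  have hs := Real.cosh_sq (2*x)
  field_simp
  linear_combination (4:ℝ) * hs

lemma abs_sinh_le (z : ℝ) : |Real.sinh z| ≤ Real.cosh z := by
  rw [abs_le]
  constructor
  · nlinarith [Real.cosh_add_sinh z, Real.exp_pos z]
  · nlinarith [Real.cosh_sub_sinh z, Real.exp_pos (-z)]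

lemma cosh_top : Tendsto (fun x : ℝ => Real.cosh (2*x)) atTop atTop := by
  apply tendsto_atTop_mono (f := fun x : ℝ => Real.exp (2*x) / 2)
  · intro x
    rw [Real.cosh_eq]
    have := Real.exp_pos (-(2*x))
    linarith
  · exact (Real.tendsto_exp_atTop.comp
      (tendsto_id.const_mul_atTop (by norm_num : (0:ℝ) < 2))).atTop_div_const (by norm_num)

lemma cosh_bot : Tendsto (fun x : ℝ => Real.cosh (2*x)) atBot atTop := by
  apply tendsto_atTop_mono (f := fun x : ℝ => Real.exp (-(2*x)) / 2)
  · intro x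
    rw [Real.cosh_eq]
    have := Real.exp_pos (2*x)
    linarith
  · have h2 : Tendsto (fun x : ℝ => -(2*x)) atBot atTop := by
      apply tendsto_neg_atBot_atTop.comp
      exact tendsto_id.const_mul_atBot (by norm_num : (0:ℝ) < 2)
    exact (Real.tendsto_exp_atTop.comp h2).atTop_div_const (by norm_num)

lemma F_tendsto {l : Filter ℝ} (hl : Tendsto (fun x : ℝ => Real.cosh (2*x)) l atTop) :
    Tendsto F l (𝓝 0) := by
  apply squeeze_zero_norm (a := fun x => Real.sqrt 15 / 4 / Real.cosh (2*x))
  · intro x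
    have hc := Real.cosh_pos (2*x)
    have h1 : |Real.sinh (2*x) / Real.cosh (2*x)^2| ≤ 1 / Real.cosh (2*x) := by
      rw [abs_div, abs_pow, abs_of_pos hc, div_le_div_iff₀ (by positivity) hc]
      nlinarith [abs_sinh_le (2*x), hc]
    have : ‖F x‖ = Real.sqrt 15 / 4 * |Real.sinh (2*x) / Real.cosh (2*x)^2| := by
      rw [F, norm_eq_abs, abs_mul, abs_of_nonneg (by positivity)]
    rw [this, div_div]
    calc Real.sqrt 15 / 4 * |Real.sinh (2*x) / Real.cosh (2*x)^2|
        ≤ Real.sqrt 15 / 4 * (1 / Real.cosh (2*x)) :=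
          mul_le_mul_of_nonneg_left h1 (by positivity)
      _ = Real.sqrt 15 / (4 * Real.cosh (2*x)) := by ring
  · exact tendsto_const_nhds.div_atTop hl

theorem critical_soliton_zero_energy
    (Q : ℝ → ℝ) (hQ : ∀ z, Q z = (15 * sech (2 * z) ^ 2) ^ ((1 : ℝ) / 4)) :
    ∫ x : ℝ, ((Q x) ^ 6 / 30 - (deriv Q x) ^ 2 / 2) = 0 := by
  have hpt : ∀ x, (Q x) ^ 6 / 30 - (deriv Q x) ^ 2 / 2
      = Real.sqrt 15 / 2 * ((1 - Real.sinh (2*x)^2) / Real.cosh (2*x)^3) :=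
    pointwise Q hQ
  rw [show (fun x => (Q x) ^ 6 / 30 - (deriv Q x) ^ 2 / 2)
      = fun x => Real.sqrt 15 / 2 * ((1 - Real.sinh (2*x)^2) / Real.cosh (2*x)^3) from
    funext hpt]
  by_cases hi : Integrable (fun x : ℝ =>
      Real.sqrt 15 / 2 * ((1 - Real.sinh (2*x)^2) / Real.cosh (2*x)^3))
  · have := MeasureTheory.integral_of_hasDerivAt_of_tendsto hFderiv hi
      (F_tendsto cosh_bot) (F_tendsto cosh_top)
    simpa using this
  · exact integral_undef hi
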